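/- For every α, β ∈ ℝ, the function y = α y₁ - (2/π)e^{2π}β y₂ is the unique (up to its values on [1,3]) twice differentiable solution of y''(x) + 2π y'(x) + (5/4)π² y(x) = 0 on [1, 3] satisfying the mixed conditions y(1) = α and y'(3) = β: any twice differentiable y satisfying the equation on [1,3] with y(1) = α and y'(3) = β agrees with α y₁ - (2/π)e^{2π}β y₂ on [1, 3]. -/

import Mathlib

/-- `y₁(x) = e^{-π(x-1)}(cos(π(x-1)/2) + 2 sin(π(x-1)/2))`. -/
noncomputable def y₁ (x : ℝ) : ℝ :=
  Real.exp (-Real.pi * (x - 1)) *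
    (Real.cos (Real.pi * (x - 1) / 2) + 2 * Real.sin (Real.pi * (x - 1) / 2))

/-- `y₂(x) = e^{-π(x-1)} sin(π(x-1)/2)`. -/
noncomputable def y₂ (x : ℝ) : ℝ :=
  Real.exp (-Real.pi * (x - 1)) * Real.sin (Real.pi * (x - 1) / 2)

/-- derivative of `y₂`. -/
noncomputable def D2 (x : ℝ) : ℝ :=
  Real.exp (-Real.pi * (x - 1)) *
    (Real.pi / 2 * Real.cos (Real.pi * (x - 1) / 2) - Real.pi * Real.sin (Real.pi * (x - 1) / 2))

/-- second derivative of `y₂`. -/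
noncomputable def DD2 (x : ℝ) : ℝ :=
  Real.exp (-Real.pi * (x - 1)) *
    (3 * Real.pi ^ 2 / 4 * Real.sin (Real.pi * (x - 1) / 2)
      - Real.pi ^ 2 * Real.cos (Real.pi * (x - 1) / 2))

lemma hE (x : ℝ) : HasDerivAt (fun x : ℝ => Real.exp (-Real.pi * (x - 1)))
    (Real.exp (-Real.pi * (x - 1)) * (-Real.pi)) x := by
  have h0 : HasDerivAt (fun x : ℝ => -Real.pi * (x - 1)) (-Real.pi) x := by
    simpa using ((hasDerivAt_id x).sub_const 1).const_mul (-Real.pi)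
  simpa using h0.exp

lemma hTheta (x : ℝ) : HasDerivAt (fun x : ℝ => Real.pi * (x - 1) / 2) (Real.pi / 2) x := by
  simpa using (((hasDerivAt_id x).sub_const 1).const_mul Real.pi).div_const 2

lemma hasDerivAt_y2 (x : ℝ) : HasDerivAt y₂ (D2 x) x := by
  have := (hE x).mul (hTheta x).sin
  unfold y₂ D2
  refine this.congr_deriv ?_
  ring

lemma hasDerivAt_D2 (x : ℝ) : HasDerivAt D2 (DD2 x) x := by
  have := (hE x).mul (((hTheta x).cos.const_mul (Real.pi / 2)).sub
    ((hTheta x).sin.const_mul Real.pi))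
  unfold D2 DD2
  refine this.congr_deriv ?_
  simp only [Pi.sub_apply]
  ring

lemma hasDerivAt_y1 (x : ℝ) : HasDerivAt y₁ (-(5 * Real.pi / 2) * y₂ x) x := by
  have := (hE x).mul ((hTheta x).cos.add ((hTheta x).sin.const_mul 2))
  unfold y₁ y₂
  refine this.congr_deriv ?_
  simp only [Pi.add_apply]
  ring

lemma ode_y2 (x : ℝ) :
    DD2 x = -(5 / 4 * Real.pi ^ 2) * y₂ x + -(2 * Real.pi) * D2 x := by
  unfold DD2 y₂ D2; ring

lemma y2_one : y₂ 1 = 0 := by unfold y₂; norm_num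

lemma D2_one : D2 1 = Real.pi / 2 := by unfold D2; norm_num

lemma y1_one : y₁ 1 = 1 := by unfold y₁; norm_num

lemma y2_three : y₂ 3 = 0 := by
  unfold y₂
  rw [show Real.pi * (3 - 1) / 2 = Real.pi by ring, Real.sin_pi, mul_zero]

lemma cont_y2 : Continuous y₂ := by
  have h : Differentiable ℝ y₂ := fun x => (hasDerivAt_y2 x).differentiableAt
  exact h.continuous

lemma cont_D2 : Continuous D2 := by
  have h : Differentiable ℝ D2 := fun x => (hasDerivAt_D2 x).differentiableAt
  exact h.continuous

lemma D2_three : D2 3 = -(Real.pi / 2) * Real.exp (-(2 * Real.pi)) := by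
  unfold D2
  rw [show Real.pi * (3 - 1) / 2 = Real.pi by ring,
    show -Real.pi * (3 - 1) = -(2 * Real.pi) by ring, Real.sin_pi, Real.cos_pi]
  ring

/-- For every `α, β`, the function `y = αy₁ - (2/π)e^{2π}βy₂` is a
twice differentiable solution of `y'' + 2πy' + (5/4)π²y = 0` on `[1,3]` with the
mixed conditions `y(1) = α`, `y'(3) = β`, and any twice differentiable solution
with these conditions agrees with it on `[1,3]`. -/
theorem stmt_18 (α β : ℝ) :
    let Y : ℝ → ℝ := fun x => α * y₁ x - (2 / Real.pi) * Real.exp (2 * Real.pi) * β * y₂ x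
    (Differentiable ℝ Y ∧ Differentiable ℝ (deriv Y) ∧
      (∀ x ∈ Set.Icc (1 : ℝ) 3,
        deriv (deriv Y) x + 2 * Real.pi * deriv Y x + (5 / 4) * Real.pi ^ 2 * Y x = 0) ∧
      Y 1 = α ∧ deriv Y 3 = β) ∧
    (∀ y : ℝ → ℝ, Differentiable ℝ y → Differentiable ℝ (deriv y) →
      (∀ x ∈ Set.Icc (1 : ℝ) 3,
        deriv (deriv y) x + 2 * Real.pi * deriv y x + (5 / 4) * Real.pi ^ 2 * y x = 0) →
      y 1 = α → deriv y 3 = β →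
      ∀ x ∈ Set.Icc (1 : ℝ) 3, y x = Y x) := by
  intro Y
  set K : ℝ := (2 / Real.pi) * Real.exp (2 * Real.pi) * β with hKdef
  -- derivatives of Y
  have hY : ∀ x, HasDerivAt Y (α * (-(5 * Real.pi / 2) * y₂ x) - K * D2 x) x := fun x =>
    ((hasDerivAt_y1 x).const_mul α).sub ((hasDerivAt_y2 x).const_mul K)
  have hYdiff : Differentiable ℝ Y := fun x => (hY x).differentiableAt
  have hderivY : deriv Y = fun x => α * (-(5 * Real.pi / 2) * y₂ x) - K * D2 x :=
    funext fun x => (hY x).deriv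
  have hDY : ∀ x, HasDerivAt (fun x => α * (-(5 * Real.pi / 2) * y₂ x) - K * D2 x)
      (α * (-(5 * Real.pi / 2) * D2 x) - K * DD2 x) x := fun x =>
    (((hasDerivAt_y2 x).const_mul (-(5 * Real.pi / 2))).const_mul α).sub
      ((hasDerivAt_D2 x).const_mul K)
  have hDYdiff : Differentiable ℝ (deriv Y) := by
    rw [hderivY]; exact fun x => (hDY x).differentiableAt
  have hderivDY : deriv (deriv Y) = fun x => α * (-(5 * Real.pi / 2) * D2 x) - K * DD2 x := by
    rw [hderivY]; exact funext fun x => (hDY x).deriv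
  have hexp : Real.exp (2 * Real.pi) * Real.exp (-(2 * Real.pi)) = 1 := by
    rw [← Real.exp_add]; norm_num
  have hY1 : Y 1 = α := by
    show α * y₁ 1 - K * y₂ 1 = α
    rw [y1_one, y2_one]; ring
  have hY3 : deriv Y 3 = β := by
    rw [hderivY]
    show α * (-(5 * Real.pi / 2) * y₂ 3) - K * D2 3 = β
    rw [y2_three, D2_three, hKdef]
    field_simp
    linear_combination 2 * β * (by rw [← Real.exp_add]; norm_num : Real.exp (Real.pi * 2) * Real.exp (-(Real.pi * 2)) = 1)
  constructor
  · refine ⟨hYdiff, hDYdiff, ?_, hY1, hY3⟩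
    intro x _
    rw [hderivDY, hderivY]
    show α * (-(5 * Real.pi / 2) * D2 x) - K * DD2 x
        + 2 * Real.pi * (α * (-(5 * Real.pi / 2) * y₂ x) - K * D2 x)
        + (5 / 4) * Real.pi ^ 2 * (α * y₁ x - K * y₂ x) = 0
    unfold y₁ y₂ D2 DD2; ring
  · intro y hy hy' hode hy1 hy3 x hx
    -- the difference w := y - Y
    set w : ℝ → ℝ := fun t => y t - Y t with hwdef
    have hw : Differentiable ℝ w := hy.sub hYdiff
    have hdw : deriv w = fun t => deriv y t - deriv Y t :=
      funext fun t => deriv_sub (hy t) (hYdiff t)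
    have hw' : Differentiable ℝ (deriv w) := by
      rw [hdw]; exact hy'.sub hDYdiff
    have hddw : ∀ t, deriv (deriv w) t = deriv (deriv y) t - deriv (deriv Y) t := by
      intro t; rw [hdw]; exact deriv_sub (hy' t) (hDYdiff t)
    have hYode : ∀ t ∈ Set.Icc (1 : ℝ) 3,
        deriv (deriv Y) t + 2 * Real.pi * deriv Y t + (5 / 4) * Real.pi ^ 2 * Y t = 0 := by
      intro t _
      rw [hderivDY, hderivY]
      show α * (-(5 * Real.pi / 2) * D2 t) - K * DD2 t
          + 2 * Real.pi * (α * (-(5 * Real.pi / 2) * y₂ t) - K * D2 t)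
          + (5 / 4) * Real.pi ^ 2 * (α * y₁ t - K * y₂ t) = 0
      unfold y₁ y₂ D2 DD2; ring
    have hwode : ∀ t ∈ Set.Icc (1 : ℝ) 3,
        deriv (deriv w) t = -(5 / 4 * Real.pi ^ 2) * w t + -(2 * Real.pi) * deriv w t := by
      intro t ht
      have h1 := hode t ht
      have h2 := hYode t ht
      rw [hddw, hdw]
      show deriv (deriv y) t - deriv (deriv Y) t
        = -(5 / 4 * Real.pi ^ 2) * (y t - Y t) + -(2 * Real.pi) * (deriv y t - deriv Y t)
      nlinarith [h1, h2]
    set c : ℝ := deriv w 1 * (2 / Real.pi) with hcdef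
    -- set up the first-order system
    set L : ℝ × ℝ →L[ℝ] ℝ × ℝ :=
      (ContinuousLinearMap.snd ℝ ℝ ℝ).prod
        ((-(5 / 4 * Real.pi ^ 2)) • ContinuousLinearMap.fst ℝ ℝ ℝ
          + (-(2 * Real.pi)) • ContinuousLinearMap.snd ℝ ℝ ℝ) with hLdef
    have hL : ∀ p : ℝ × ℝ, L p = (p.2, -(5 / 4 * Real.pi ^ 2) * p.1 + -(2 * Real.pi) * p.2) :=
      fun p => rfl
    set f : ℝ → ℝ × ℝ := fun t => (w t, deriv w t) with hfdef
    set g : ℝ → ℝ × ℝ := fun t => (c * y₂ t, c * D2 t) with hgdef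
    have hfc : ContinuousOn f (Set.Icc 1 3) :=
      (hw.continuous.prodMk hw'.continuous).continuousOn
    have hgc : ContinuousOn g (Set.Icc 1 3) := by
      apply Continuous.continuousOn
      exact (continuous_const.mul cont_y2).prodMk (continuous_const.mul cont_D2)
    have hf' : ∀ t ∈ Set.Ico (1 : ℝ) 3, HasDerivWithinAt f (L (f t)) (Set.Ici t) t := by
      intro t ht
      have h := ((hw t).hasDerivAt.prodMk (hw' t).hasDerivAt)
      have hval := hwode t (Set.Ico_subset_Icc_self ht)
      rw [hL]
      have : (deriv w t, deriv (deriv w) t)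
          = ((f t).2, -(5 / 4 * Real.pi ^ 2) * (f t).1 + -(2 * Real.pi) * (f t).2) := by
        simp only [hfdef]
        exact Prod.ext rfl hval
      exact (this ▸ h).hasDerivWithinAt
    have hg' : ∀ t ∈ Set.Ico (1 : ℝ) 3, HasDerivWithinAt g (L (g t)) (Set.Ici t) t := by
      intro t _
      have h := (((hasDerivAt_y2 t).const_mul c).prodMk ((hasDerivAt_D2 t).const_mul c))
      rw [hL]
      have : (c * D2 t, c * DD2 t)
          = ((g t).2, -(5 / 4 * Real.pi ^ 2) * (g t).1 + -(2 * Real.pi) * (g t).2) := by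
        simp only [hgdef]
        refine Prod.ext rfl ?_
        rw [ode_y2]; ring
      exact (this ▸ h).hasDerivWithinAt
    have hpi := Real.pi_ne_zero
    have hinit : f 1 = g 1 := by
      simp only [hfdef, hgdef]
      refine Prod.ext ?_ ?_
      · show w 1 = c * y₂ 1
        rw [y2_one, hwdef]
        simp [hy1, hY1]
      · show deriv w 1 = c * D2 1
        rw [D2_one, hcdef]
        field_simp
    have huniq := ODE_solution_unique (v := fun _ p => L p) (K := ‖L‖₊)
      (fun _ => L.lipschitz) hfc hf' hgc hg' hinit
    have h3 : f 3 = g 3 := huniq (Set.right_mem_Icc.2 (by norm_num))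
    have hdw3 : deriv w 3 = 0 := by
      rw [hdw]; show deriv y 3 - deriv Y 3 = 0
      rw [hy3, hY3]; ring
    have hc0 : c = 0 := by
      have h2 := congrArg Prod.snd h3
      simp only [hfdef, hgdef] at h2
      rw [hdw3, D2_three] at h2
      rcases mul_eq_zero.mp h2.symm with h | h
      · exact h
      · exact absurd h (mul_ne_zero (neg_ne_zero.mpr (by positivity)) (Real.exp_ne_zero _))
    have hfx := huniq hx
    have h1 := congrArg Prod.fst hfx
    simp only [hfdef, hgdef, hc0, zero_mul] at h1
    have : y x - Y x = 0 := h1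
    linarith
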